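/- If μ(X₁×{x̄₂}) = 1 and ν({ȳ₁}×Y₂) = 1 for some x̄₂ ∈ X₂, ȳ₁ ∈ Y₁, then the set of cardinal flows F(μ,ν) contains exactly one element, namely (μ ⊗ δ_{ȳ₁}, δ_{x̄₂} ⊗ ν), and consequently every coupling π ∈ Π(μ,ν) is an optimal transportation plan for any separable cost c = c₁ + c₂. -/

import Mathlib

open MeasureTheory ProbabilityTheory
open scoped ENNReal ProbabilityTheory

noncomputable section

variable {X₁ X₂ Y₁ Y₂ : Type*} [MeasurableSpace X₁] [MeasurableSpace X₂]
  [MeasurableSpace Y₁] [MeasurableSpace Y₂]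

/-- `π` is a transportation plan (coupling) between `μ` and `ν`. -/
def IsCoupling {A B : Type*} [MeasurableSpace A] [MeasurableSpace B]
    (π : Measure (A × B)) (μ : Measure A) (ν : Measure B) : Prop :=
  π.map Prod.fst = μ ∧ π.map Prod.snd = ν

/-- The minimal transportation (Wasserstein) cost for the cost `c`. -/
noncomputable def Wc {A B : Type*} [MeasurableSpace A] [MeasurableSpace B]
    (c : A → B → ℝ≥0∞) (μ : Measure A) (ν : Measure B) : ℝ≥0∞ :=
  ⨅ π ∈ {π : Measure (A × B) | IsCoupling π μ ν}, ∫⁻ p, c p.1 p.2 ∂π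

/-- `(f1, f2)` is a cardinal flow between `μ ∈ P(X₁ × X₂)` and `ν ∈ P(Y₁ × Y₂)`:
the marginal of `f1` on `X = X₁ × X₂` is `μ`, the marginal of `f2` on `Y = Y₁ × Y₂` is `ν`,
and `f1`, `f2` have the same marginal on `Y₁ × X₂`. -/
def IsCardinalFlow (μ : Measure (X₁ × X₂)) (ν : Measure (Y₁ × Y₂))
    (f1 : Measure ((X₁ × X₂) × Y₁)) (f2 : Measure (X₂ × (Y₁ × Y₂))) : Prop :=
  f1.map Prod.fst = μ ∧ f2.map Prod.snd = ν ∧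
    f1.map (fun p => (p.2, p.1.2)) = f2.map (fun p => (p.2.1, p.1))

/-- The set of cardinal flows between `μ` and `ν`. -/
def Flows (μ : Measure (X₁ × X₂)) (ν : Measure (Y₁ × Y₂)) :
    Set (Measure ((X₁ × X₂) × Y₁) × Measure (X₂ × (Y₁ × Y₂))) :=
  {F | IsProbabilityMeasure F.1 ∧ IsProbabilityMeasure F.2 ∧ IsCardinalFlow μ ν F.1 F.2}

/-- The cardinal flow functional `CT(f¹,f²) = ∫ c₁ df¹ + ∫ c₂ df²`. -/
noncomputable def CT (c₁ : X₁ → Y₁ → ℝ≥0∞) (c₂ : X₂ → Y₂ → ℝ≥0∞)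
    (F : Measure ((X₁ × X₂) × Y₁) × Measure (X₂ × (Y₁ × Y₂))) : ℝ≥0∞ :=
  ∫⁻ q, c₁ q.1.1 q.2 ∂F.1 + ∫⁻ q, c₂ q.1 q.2.2 ∂F.2

/-- `ζ` is a pivot measure between `μ` and `ν` for the separable cost `c₁ + c₂`:
some optimal cardinal flow glues on `ζ`. -/
def IsPivot (μ : Measure (X₁ × X₂)) (ν : Measure (Y₁ × Y₂))
    (c₁ : X₁ → Y₁ → ℝ≥0∞) (c₂ : X₂ → Y₂ → ℝ≥0∞) (ζ : Measure (Y₁ × X₂)) : Prop :=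
  ∃ F ∈ Flows μ ν, F.1.map (fun p => (p.2, p.1.2)) = ζ ∧
    CT c₁ c₂ F = ⨅ G ∈ Flows μ ν, CT c₁ c₂ G

section Aux

variable {A B : Type*} [MeasurableSpace A] [MeasurableSpace B]

/-- From full measure of a measurable set, get an a.e. statement. -/
lemma ae_of_prob_eq_one {κ : Measure A} [IsProbabilityMeasure κ] {s : Set A}
    (hs : MeasurableSet s) (h : κ s = 1) : ∀ᵐ a ∂κ, a ∈ s := by
  rw [ae_iff]
  have : {a | ¬ a ∈ s} = sᶜ := rfl
  rw [this, prob_compl_eq_zero_iff hs]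
  exact h

/-- A prob. measure whose map is a.e. constant pushes to a Dirac. -/
lemma map_eq_dirac_of_ae {κ : Measure A} [IsProbabilityMeasure κ] {f : A → B} {c : B}
    (h : ∀ᵐ a ∂κ, f a = c) : κ.map f = Measure.dirac c := by
  rw [Measure.map_congr h, Measure.map_const, measure_univ, one_smul]

/-- A prob. measure on `A × B` concentrated on `{p | p.2 = b}` is a product with `dirac b`. -/
lemma eq_prod_dirac_of_snd [MeasurableSingletonClass B]
    {κ : Measure (A × B)} [IsProbabilityMeasure κ] {b : B}
    (h : κ {p | p.2 = b} = 1) : κ = (κ.map Prod.fst).prod (Measure.dirac b) := by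
  have : IsProbabilityMeasure (κ.map Prod.fst) :=
    Measure.isProbabilityMeasure_map measurable_fst.aemeasurable
  have hae : ∀ᵐ p ∂κ, p.2 = b :=
    ae_of_prob_eq_one (measurable_snd (measurableSet_singleton b)) h
  calc κ = κ.map id := Measure.map_id.symm
    _ = κ.map (fun p => (p.1, b)) :=
        Measure.map_congr (hae.mono fun p hp => by simp [Prod.ext_iff, hp])
    _ = (κ.map Prod.fst).map (fun a => (a, b)) :=
        (Measure.map_map (measurable_id.prodMk measurable_const) measurable_fst).symm
    _ = (κ.map Prod.fst).prod (Measure.dirac b) := (Measure.prod_dirac b).symm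

/-- A prob. measure on `A × B` concentrated on `{p | p.1 = a}` is a product with `dirac a`. -/
lemma eq_dirac_prod_of_fst [MeasurableSingletonClass A]
    {κ : Measure (A × B)} [IsProbabilityMeasure κ] {a : A}
    (h : κ {p | p.1 = a} = 1) : κ = (Measure.dirac a).prod (κ.map Prod.snd) := by
  have : IsProbabilityMeasure (κ.map Prod.snd) :=
    Measure.isProbabilityMeasure_map measurable_snd.aemeasurable
  have hae : ∀ᵐ p ∂κ, p.1 = a :=
    ae_of_prob_eq_one (measurable_fst (measurableSet_singleton a)) h
  calc κ = κ.map id := Measure.map_id.symm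
    _ = κ.map (fun p => (a, p.2)) :=
        Measure.map_congr (hae.mono fun p hp => by simp [Prod.ext_iff, hp])
    _ = (κ.map Prod.snd).map (fun x => (a, x)) :=
        (Measure.map_map (measurable_const.prodMk measurable_id) measurable_snd).symm
    _ = (Measure.dirac a).prod (κ.map Prod.snd) := (Measure.dirac_prod a).symm

end Aux

theorem stmt13 [MeasurableSingletonClass X₂] [MeasurableSingletonClass Y₁]
    (μ : Measure (X₁ × X₂)) (ν : Measure (Y₁ × Y₂))
    [IsProbabilityMeasure μ] [IsProbabilityMeasure ν]
    (xb : X₂) (yb : Y₁)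
    (hμ : μ {p | p.2 = xb} = 1) (hν : ν {p | p.1 = yb} = 1) :
    -- the set of cardinal flows is a singleton
    Flows μ ν = {(μ.prod (Measure.dirac yb), (Measure.dirac xb).prod ν)} ∧
    -- every coupling is an optimal transportation plan for any separable cost
    ∀ (c₁ : X₁ → Y₁ → ℝ≥0∞) (c₂ : X₂ → Y₂ → ℝ≥0∞),
      (Measurable fun p : X₁ × Y₁ => c₁ p.1 p.2) →
      (Measurable fun p : X₂ × Y₂ => c₂ p.1 p.2) →
      ∀ π : Measure ((X₁ × X₂) × (Y₁ × Y₂)), IsCoupling π μ ν →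
        ∫⁻ p, c₁ p.1.1 p.2.1 + c₂ p.1.2 p.2.2 ∂π
          = Wc (fun x y => c₁ x.1 y.1 + c₂ x.2 y.2) μ ν := by
  have hμ2 : MeasurableSet {p : X₁ × X₂ | p.2 = xb} :=
    measurable_snd (measurableSet_singleton xb)
  have hν1 : MeasurableSet {p : Y₁ × Y₂ | p.1 = yb} :=
    measurable_fst (measurableSet_singleton yb)
  constructor
  · -- Flows is a singleton
    ext F
    obtain ⟨f1, f2⟩ := F
    simp only [Set.mem_singleton_iff, Prod.mk.injEq]
    constructor
    · rintro ⟨hp1, hp2, h1, h2, h3⟩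
      -- f1 is concentrated on p.1.2 = xb
      have hf1x : f1 {p | p.1.2 = xb} = 1 := by
        have := Measure.map_apply (μ := f1) measurable_fst hμ2
        rw [h1] at this
        simpa using this.symm.trans hμ
      -- f2 is concentrated on p.2.1 = yb
      have hf2y : f2 {p | p.2.1 = yb} = 1 := by
        have := Measure.map_apply (μ := f2) measurable_snd hν1
        rw [h2] at this
        simpa using this.symm.trans hν
      have hm1 : Measurable (fun p : (X₁ × X₂) × Y₁ => (p.2, p.1.2)) :=
        measurable_snd.prodMk measurable_fst.snd
      have hm2 : Measurable (fun p : X₂ × (Y₁ × Y₂) => (p.2.1, p.1)) :=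
        measurable_snd.fst.prodMk measurable_fst
      have hY : MeasurableSet {q : Y₁ × X₂ | q.1 = yb} :=
        measurable_fst (measurableSet_singleton yb)
      have hX : MeasurableSet {q : Y₁ × X₂ | q.2 = xb} :=
        measurable_snd (measurableSet_singleton xb)
      -- f1 is concentrated on p.2 = yb
      have hf1y : f1 {p | p.2 = yb} = 1 := by
        have e1 := Measure.map_apply (μ := f1) hm1 hY
        have e2 := Measure.map_apply (μ := f2) hm2 hY
        rw [h3] at e1
        have : f1 {p | p.2 = yb} = f2 {p | p.2.1 = yb} := by
          simpa using e1.symm.trans e2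
        rw [this]; exact hf2y
      -- f2 is concentrated on p.1 = xb
      have hf2x : f2 {p | p.1 = xb} = 1 := by
        have e1 := Measure.map_apply (μ := f1) hm1 hX
        have e2 := Measure.map_apply (μ := f2) hm2 hX
        rw [h3] at e1
        have : f2 {p | p.1 = xb} = f1 {p | p.1.2 = xb} := by
          simpa using e2.symm.trans e1
        rw [this]; exact hf1x
      constructor
      · rw [eq_prod_dirac_of_snd hf1y, h1]
      · rw [eq_dirac_prod_of_fst hf2x, h2]
    · rintro ⟨rfl, rfl⟩
      have key1 : μ.prod (Measure.dirac yb) = μ.map (fun x => (x, yb)) :=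
        Measure.prod_dirac yb
      have key2 : (Measure.dirac xb).prod ν = ν.map (Prod.mk xb) :=
        Measure.dirac_prod xb
      have hp1 : IsProbabilityMeasure (μ.prod (Measure.dirac yb)) := by infer_instance
      have hp2 : IsProbabilityMeasure ((Measure.dirac xb).prod ν) := by infer_instance
      refine ⟨hp1, hp2, ?_, ?_, ?_⟩
      · rw [Measure.map_fst_prod]; simp
      · rw [Measure.map_snd_prod]; simp
      · -- both maps equal dirac (yb, xb)
        have haeμ : ∀ᵐ x ∂μ, x.2 = xb := ae_of_prob_eq_one hμ2 hμ
        have haeν : ∀ᵐ y ∂ν, y.1 = yb := ae_of_prob_eq_one hν1 hν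
        have l1 : (μ.prod (Measure.dirac yb)).map
            (fun p : (X₁ × X₂) × Y₁ => (p.2, p.1.2)) = Measure.dirac (yb, xb) := by
          rw [key1, Measure.map_map (g := fun p : (X₁ × X₂) × Y₁ => (p.2, p.1.2))
            (f := fun x : X₁ × X₂ => (x, yb))
            (measurable_snd.prodMk measurable_fst.snd)
            (measurable_id.prodMk measurable_const)]
          exact map_eq_dirac_of_ae (haeμ.mono fun x hx => by simp [Function.comp, hx])
        have l2 : ((Measure.dirac xb).prod ν).map
            (fun p : X₂ × (Y₁ × Y₂) => (p.2.1, p.1)) = Measure.dirac (yb, xb) := by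
          rw [key2, Measure.map_map (g := fun p : X₂ × (Y₁ × Y₂) => (p.2.1, p.1))
            (f := Prod.mk xb)
            (measurable_snd.fst.prodMk measurable_fst)
            (measurable_const.prodMk measurable_id)]
          exact map_eq_dirac_of_ae (haeν.mono fun y hy => by simp [Function.comp, hy])
        rw [l1, l2]
  · -- every coupling is optimal
    intro c₁ c₂ hc₁ hc₂ π hπ
    -- the cost of any coupling is the constant K
    set K : ℝ≥0∞ := (∫⁻ x, c₁ x.1 yb ∂μ) + ∫⁻ y, c₂ xb y.2 ∂ν with hK
    have key : ∀ ρ : Measure ((X₁ × X₂) × (Y₁ × Y₂)), IsCoupling ρ μ ν →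
        ∫⁻ p, c₁ p.1.1 p.2.1 + c₂ p.1.2 p.2.2 ∂ρ = K := by
      rintro ρ ⟨hρ1, hρ2⟩
      have : IsProbabilityMeasure ρ := by
        constructor
        have := Measure.map_apply (μ := ρ) measurable_fst MeasurableSet.univ
        rw [hρ1] at this
        simpa using this.symm.trans (measure_univ)
      have haex : ∀ᵐ p ∂ρ, p.1.2 = xb := by
        refine ae_of_prob_eq_one (measurable_fst.snd (measurableSet_singleton xb)) ?_
        have := Measure.map_apply (μ := ρ) measurable_fst hμ2
        rw [hρ1] at this
        exact this.symm.trans hμ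
      have haey : ∀ᵐ p ∂ρ, p.2.1 = yb := by
        refine ae_of_prob_eq_one (measurable_snd.fst (measurableSet_singleton yb)) ?_
        have := Measure.map_apply (μ := ρ) measurable_snd hν1
        rw [hρ2] at this
        exact this.symm.trans hν
      have step1 : ∫⁻ p, c₁ p.1.1 p.2.1 + c₂ p.1.2 p.2.2 ∂ρ
          = ∫⁻ p, c₁ p.1.1 yb + c₂ xb p.2.2 ∂ρ := by
        refine lintegral_congr_ae ?_
        filter_upwards [haex, haey] with p hx hy
        rw [hx, hy]
      have m1 : Measurable (fun p : (X₁ × X₂) × (Y₁ × Y₂) => c₁ p.1.1 yb) :=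
        hc₁.comp (measurable_fst.fst.prodMk measurable_const)
      have m2 : Measurable (fun p : (X₁ × X₂) × (Y₁ × Y₂) => c₂ xb p.2.2) :=
        hc₂.comp (measurable_const.prodMk measurable_snd.snd)
      rw [step1, lintegral_add_left m1]
      congr 1
      · rw [← hρ1]
        exact (lintegral_map (f := fun x : X₁ × X₂ => c₁ x.1 yb)
          (hc₁.comp (measurable_fst.prodMk measurable_const)) measurable_fst).symm
      · rw [← hρ2]
        exact (lintegral_map (f := fun y : Y₁ × Y₂ => c₂ xb y.2)
          (hc₂.comp (measurable_const.prodMk measurable_snd)) measurable_snd).symm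
    rw [key π hπ]
    have hmem : IsCoupling (μ.prod ν) μ ν := by
      constructor
      · rw [Measure.map_fst_prod]; simp
      · rw [Measure.map_snd_prod]; simp
    apply le_antisymm
    · exact le_iInf₂ fun ρ hρ => (key ρ hρ).ge
    · exact iInf₂_le_of_le (μ.prod ν) hmem (key _ hmem).le
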